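/- The quadratic form q(x₁,…,x₆) = x₁x₂ + x₃x₄ + x₅x₆ + x₁ + x₂ + x₃ + x₄ + x₅ + x₆ on GF(2)^6 has exactly 27 nonzero zeros; moreover, for every nonzero symmetric 3×3 matrix X over GF(2), q(α(X)) = 0 if and only if X + 𝟙 is invertible (so the set of nonzero zeros of q is exactly α({Y + 𝟙ß: Y invertible symmetric, Y ≠ 𝟙})). -/
import Mathlib
set_option maxRecDepth 100000
set_option maxHeartbeats 2000000
open Matrix
/-- The coordinate map `α`. -/
def alphaMap (X : Matrix (Fin 3) (Fin 3) (ZMod 2)) : Fin 6 → ZMod 2 :=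
  ![X 0 0, X 1 2 + X 1 1 * X 2 2, X 1 1, X 0 2 + X 0 0 * X 2 2, X 2 2,
    X 0 1 + X 0 0 * X 1 1]
/-- The quadratic form `q(x) = x₁x₂ + x₃x₄ + x₅x₆ + x₁ + x₂ + x₃ + x₄ + x₅ + x₆`. -/
def qForm (x : Fin 6 → ZMod 2) : ZMod 2 :=
  x 0 * x 1 + x 2 * x 3 + x 4 * x 5 + x 0 + x 1 + x 2 + x 3 + x 4 + x 5

def invMap (x : Fin 6 → ZMod 2) : Matrix (Fin 3) (Fin 3) (ZMod 2) :=
  !![x 0, x 5 + x 0 * x 2, x 3 + x 0 * x 4;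
     x 5 + x 0 * x 2, x 2, x 1 + x 2 * x 4;
     x 3 + x 0 * x 4, x 1 + x 2 * x 4, x 4]

lemma L1 : ∀ x : Fin 6 → ZMod 2, alphaMap (invMap x) = x := by decide
lemma L2 : ∀ x : Fin 6 → ZMod 2, invMap x = (invMap x)ᵀ := by decide
lemma L4 : ∀ X : Matrix (Fin 3) (Fin 3) (ZMod 2), X = Xᵀ → X ≠ 0 → alphaMap X ≠ 0 := by decide

lemma part2 : ∀ X : Matrix (Fin 3) (Fin 3) (ZMod 2), X = Xᵀ → X ≠ 0 →
    (qForm (alphaMap X) = 0 ↔ (X + 1).det = 1) := by decide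

lemma two_eq_zero : (1 : Matrix (Fin 3) (Fin 3) (ZMod 2)) + 1 = 0 := by decide

lemma setLemma (X : Matrix (Fin 3) (Fin 3) (ZMod 2)) :
    (∃ Y : Matrix (Fin 3) (Fin 3) (ZMod 2), Y = Yᵀ ∧ Y.det = 1 ∧ Y ≠ 1 ∧ X = Y + 1) ↔
    (X = Xᵀ ∧ X ≠ 0 ∧ (X + 1).det = 1) := by
  constructor
  · rintro ⟨Y, h1, h2, h3, rfl⟩
    refine ⟨by rw [transpose_add, transpose_one, ← h1], ?_, by rw [add_assoc, two_eq_zero, add_zero]; exact h2⟩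
    intro h
    apply h3
    have := congrArg (· + 1) h
    simpa [add_assoc, two_eq_zero] using this
  · rintro ⟨h1, h2, h3⟩
    refine ⟨X + 1, by rw [transpose_add, transpose_one, ← h1], h3, ?_,
      by rw [add_assoc, two_eq_zero, add_zero]⟩
    intro h
    apply h2
    have := congrArg (· + 1) h
    simpa [add_assoc, two_eq_zero] using this

/-- `q` has exactly 27 nonzero zeros; for nonzero symmetric `X`, `q(α(X)) = 0` iff
`X + 1` is invertible; so the zeros of `q` are exactly `α` of the translates by `1`
of the invertible symmetric matrices different from `1`. -/
theorem q_zeros :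
    Nat.card {x : Fin 6 → ZMod 2 // x ≠ 0 ∧ qForm x = 0} = 27 ∧
    (∀ X : Matrix (Fin 3) (Fin 3) (ZMod 2), X = Xᵀ → X ≠ 0 →
      (qForm (alphaMap X) = 0 ↔ (X + 1).det = 1)) ∧
    {x : Fin 6 → ZMod 2 | x ≠ 0 ∧ qForm x = 0} =
      alphaMap '' {X : Matrix (Fin 3) (Fin 3) (ZMod 2) |
        ∃ Y : Matrix (Fin 3) (Fin 3) (ZMod 2), Y = Yᵀ ∧ Y.det = 1 ∧ Y ≠ 1 ∧ X = Y + 1} := by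
  refine ⟨?_, part2, ?_⟩
  · simp only [Nat.card_eq_fintype_card]; decide
  · ext x
    simp only [Set.mem_setOf_eq, Set.mem_image]
    constructor
    · rintro ⟨hx0, hq⟩
      refine ⟨invMap x, (setLemma _).mpr ⟨L2 x, ?_, ?_⟩, L1 x⟩
      · intro h
        apply hx0
        rw [← L1 x, h]
        decide
      · refine (part2 _ (L2 x) ?_).mp (by rw [L1 x]; exact hq)
        intro h
        apply hx0
        rw [← L1 x, h]
        decide
    · rintro ⟨X, hX, rfl⟩
      obtain ⟨h1, h2, h3⟩ := (setLemma X).mp hX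
      exact ⟨L4 X h1 h2, (part2 X h1 h2).mpr h3⟩
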